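/- (Konno–Kuroda resolvent identity, part 1) Let H₀ be self-adjoint on a Hilbert space ℋ, A : ℋ → 𝒦 bounded, g ∈ ℝ \ {0}, and H_g = H₀ − g A*A (self-adjoint on D(H₀)). For every z ∈ ρ(H₀) ∩ ρ(H_g), the operator 1_𝒦 − φ(z) with φ(z) = g A R_{H₀}(z) A* is invertible in ℬ(𝒦) with inverse 1_𝒦 + M(z), where M(z) = g A R_{H_g}(z) A*. -/

import Mathlib

open MeasureTheory

/-- Konno–Kuroda resolvent identity, part 1: with `H_g = H₀ − g A*A`, for
`z ∈ ρ(H₀) ∩ ρ(H_g)` the operator `1 − φ(z)`, `φ(z) = g A R_{H₀}(z) A*`, is invertible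
with inverse `1 + M(z)`, `M(z) = g A R_{H_g}(z) A*`. -/
theorem stmt_2 {H K : Type*} [NormedAddCommGroup H] [InnerProductSpace ℂ H] [CompleteSpace H]
    [NormedAddCommGroup K] [InnerProductSpace ℂ K] [CompleteSpace K]
    (H0 : H →ₗ[ℂ] H) (hsym : ∀ x y : H, (inner ℂ (H0 x) y : ℂ) = inner ℂ x (H0 y))
    (A : H →L[ℂ] K) (g : ℝ) (hg : g ≠ 0) (z : ℂ)
    (Hg : H →ₗ[ℂ] H)
    (hHg : ∀ x, Hg x = H0 x - (g : ℂ) • (ContinuousLinearMap.adjoint A (A x)))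
    (R0 Rg : H →L[ℂ] H)
    (hR0₁ : ∀ x, H0 (R0 x) - z • (R0 x) = x) (hR0₂ : ∀ x, R0 (H0 x - z • x) = x)
    (hRg₁ : ∀ x, Hg (Rg x) - z • (Rg x) = x) (hRg₂ : ∀ x, Rg (Hg x - z • x) = x) :
    ((1 : K →L[ℂ] K) - (g : ℂ) • (A ∘L R0 ∘L ContinuousLinearMap.adjoint A)) *
        ((1 : K →L[ℂ] K) + (g : ℂ) • (A ∘L Rg ∘L ContinuousLinearMap.adjoint A)) = 1 ∧
    ((1 : K →L[ℂ] K) + (g : ℂ) • (A ∘L Rg ∘L ContinuousLinearMap.adjoint A)) *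
        ((1 : K →L[ℂ] K) - (g : ℂ) • (A ∘L R0 ∘L ContinuousLinearMap.adjoint A)) = 1 := by
  set B := ContinuousLinearMap.adjoint A with hB
  have key1 : ∀ x, Rg x = R0 x + (g : ℂ) • R0 (B (A (Rg x))) := by
    intro x
    have h0 := hRg₁ x
    rw [hHg] at h0
    have h1 : H0 (Rg x) - z • (Rg x) = x + (g : ℂ) • B (A (Rg x)) := by
      linear_combination (norm := module) h0
    have h2 := hR0₂ (Rg x)
    rw [h1, map_add, _root_.map_smul] at h2
    exact h2.symm
  have key2 : ∀ x, Rg x = R0 x + (g : ℂ) • Rg (B (A (R0 x))) := by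
    intro x
    have h1 : Hg (R0 x) - z • (R0 x) = x - (g : ℂ) • B (A (R0 x)) := by
      rw [hHg]
      linear_combination (norm := module) hR0₁ x
    have h2 := hRg₂ (R0 x)
    rw [h1, map_sub, _root_.map_smul] at h2
    exact sub_eq_iff_eq_add.mp h2
  constructor
  · ext v
    have e := congrArg (fun w => A w) (key1 (B v))
    simp only [map_add, _root_.map_smul] at e
    simp only [ContinuousLinearMap.mul_apply, ContinuousLinearMap.sub_apply,
      ContinuousLinearMap.add_apply, ContinuousLinearMap.one_apply,
      ContinuousLinearMap.smul_apply, ContinuousLinearMap.comp_apply, ← hB,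
      map_add, map_sub, _root_.map_smul]
    linear_combination (norm := module) ((g : ℂ)) • e
  · ext v
    have e := congrArg (fun w => A w) (key2 (B v))
    simp only [map_add, _root_.map_smul] at e
    simp only [ContinuousLinearMap.mul_apply, ContinuousLinearMap.sub_apply,
      ContinuousLinearMap.add_apply, ContinuousLinearMap.one_apply,
      ContinuousLinearMap.smul_apply, ContinuousLinearMap.comp_apply, ← hB,
      map_add, map_sub, _root_.map_smul]
    linear_combination (norm := module) ((g : ℂ)) • e
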